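/- Let P be a morphism V_m ⇉ V_n with Potapov transform S(P) = [[A, B],[Bᵗ, C]] and Q be a morphism V_k ⇉ V_m with Potapov transform S(Q) = [[K, L],[Lᵗ, M]]. Then C + K is invertible and the Potapov transform of the product PQ : V_k ⇉ V_n is S(PQ) = [[A − B(C+K)⁻¹Bᵗ, −B(C+K)⁻¹L],[−Lᵗ(C+K)⁻¹Bᵗ, M − Lᵗ(C+K)⁻¹L]]. -/

import Mathlib

open Matrix

noncomputable section

/-- `V_n = ℂⁿ ⊕ ℂⁿ`, with coordinates `(v⁺, v⁻)`. -/
abbrev Vsp (n : ℕ) := (Fin n → ℂ) × (Fin n → ℂ)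

/-- The skew-symmetric bilinear form
`L_n((v⁺,v⁻),(w⁺,w⁻)) = Σ_j (v⁺_j w⁻_j − v⁻_j w⁺_j)`. -/
def Lf {n : ℕ} (v w : Vsp n) : ℂ := ∑ j, (v.1 j * w.2 j - v.2 j * w.1 j)

/-- The Hermitian form
`H_n((v⁺,v⁻),(w⁺,w⁻)) = (1/i) Σ_j (v⁺_j conj(w⁻_j) − v⁻_j conj(w⁺_j))`. -/
def Hf {n : ℕ} (v w : Vsp n) : ℂ :=
  (1 / Complex.I) * ∑ j, (v.1 j * (starRingEnd ℂ) (w.2 j) - v.2 j * (starRingEnd ℂ) (w.1 j))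

/-- `L_{m,n}((v,w),(v′,w′)) = L_m(v,v′) − L_n(w,w′)` on `V_m ⊕ V_n`. -/
def Lmn {m n : ℕ} (v w : Vsp m × Vsp n) : ℂ := Lf v.1 w.1 - Lf v.2 w.2

/-- `H_{m,n}((v,w),(v′,w′)) = H_m(v,v′) − H_n(w,w′)` on `V_m ⊕ V_n`. -/
def Hmn {m n : ℕ} (v w : Vsp m × Vsp n) : ℂ := Hf v.1 w.1 - Hf v.2 w.2

/-- A morphism `V_m ⇉ V_n`: a complex subspace `P ⊆ V_m ⊕ V_n` of dimension `m+n`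
on which `L_{m,n}` vanishes identically and `H_{m,n}` is strictly positive definite. -/
def IsMorphism {m n : ℕ} (P : Submodule ℂ (Vsp m × Vsp n)) : Prop :=
  Module.finrank ℂ P = m + n ∧
  (∀ p ∈ P, ∀ q ∈ P, Lmn p q = 0) ∧
  (∀ p ∈ P, p ≠ 0 → 0 < (Hmn p p).re)

/-- The product (composition) of linear relations:
`QP = {(v, y) : ∃ w, (v, w) ∈ P ∧ (w, y) ∈ Q}`. -/
def relComp {α β γ : Type*} [AddCommGroup α] [Module ℂ α] [AddCommGroup β] [Module ℂ β]
    [AddCommGroup γ] [Module ℂ γ]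
    (P : Submodule ℂ (α × β)) (Q : Submodule ℂ (β × γ)) : Submodule ℂ (α × γ) where
  carrier := {x | ∃ w : β, (x.1, w) ∈ P ∧ (w, x.2) ∈ Q}
  add_mem' := by
    rintro ⟨a, c⟩ ⟨a', c'⟩ ⟨w, hP, hQ⟩ ⟨w', hP', hQ'⟩
    exact ⟨w + w', P.add_mem hP hP', Q.add_mem hQ hQ'⟩
  zero_mem' := ⟨0, P.zero_mem, Q.zero_mem⟩
  smul_mem' := by
    rintro c ⟨a, b⟩ ⟨w, hP, hQ⟩
    exact ⟨c • w, P.smul_mem c hP, Q.smul_mem c hQ⟩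

/-- The solution set of the Potapov system of linear equations attached to a
symmetric `(n+m)×(n+m)` matrix `S = [[A,B],[Bᵗ,C]]`: the set of pairs
`((w⁺,w⁻),(v⁺,v⁻)) ∈ V_m ⊕ V_n` with `−v⁺ = A v⁻ + B w⁻`, `w⁺ = Bᵗ v⁻ + C w⁻`. -/
def potapovSet {m n : ℕ} (S : Matrix (Fin n ⊕ Fin m) (Fin n ⊕ Fin m) ℂ) :
    Set (Vsp m × Vsp n) :=
  {p | -p.2.1 = S.toBlocks₁₁.mulVec p.2.2 + S.toBlocks₁₂.mulVec p.1.2 ∧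
       p.1.1 = S.toBlocks₂₁.mulVec p.2.2 + S.toBlocks₂₂.mulVec p.1.2}



open Matrix in
private theorem auxPC_isUnit {m : ℕ} (Z : Matrix (Fin m) (Fin m) ℂ) (hsym : Zᵀ = Z)
    (hneg : ∀ y : Fin m → ℝ, y ≠ 0 →
      (((fun i => (y i : ℂ)) ⬝ᵥ Z *ᵥ (fun i => (y i : ℂ))).re) < 0) :
    IsUnit Z := by
  rw [Matrix.isUnit_iff_isUnit_det, isUnit_iff_ne_zero]
  intro hdet
  obtain ⟨x, hx, hZx⟩ := (Matrix.exists_mulVec_eq_zero_iff).mpr hdet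
  set a : Fin m → ℝ := fun i => (x i).re with ha
  set b : Fin m → ℝ := fun i => (x i).im with hb
  set ac : Fin m → ℂ := fun i => (a i : ℂ)
  set bc : Fin m → ℂ := fun i => (b i : ℂ)
  have hxab : x = ac + Complex.I • bc := by
    funext i
    simp [ac, bc, ha, hb, Complex.ext_iff, Complex.mul_re, Complex.mul_im]
  have h0 : (ac - Complex.I • bc) ⬝ᵥ Z *ᵥ (ac + Complex.I • bc) = 0 := by
    rw [← hxab, hZx]; simp
  have hsymm : ac ⬝ᵥ Z *ᵥ bc = bc ⬝ᵥ Z *ᵥ ac := by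
    rw [Matrix.dotProduct_mulVec, ← Matrix.mulVec_transpose, hsym,
      dotProduct_comm]
  have hexp : ac ⬝ᵥ Z *ᵥ ac + bc ⬝ᵥ Z *ᵥ bc = 0 := by
    have := h0
    rw [Matrix.mulVec_add, Matrix.mulVec_smul, sub_dotProduct,
      dotProduct_add, dotProduct_add, smul_dotProduct,
      dotProduct_smul, smul_dotProduct, dotProduct_smul] at this
    rw [hsymm] at this
    have hI : Complex.I • (Complex.I • (bc ⬝ᵥ Z *ᵥ bc)) = -(bc ⬝ᵥ Z *ᵥ bc) := by
      rw [smul_smul, Complex.I_mul_I]; simp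
    rw [hI] at this
    linear_combination this
  by_cases hA : a = 0
  · by_cases hB : b = 0
    · apply hx; funext i
      have h1 := congrFun hA i
      have h2 := congrFun hB i
      simp only [ha, hb, Pi.zero_apply] at h1 h2
      exact Complex.ext h1 h2
    · have := hneg b hB
      have h2 : ac = 0 := by funext i; simp [ac, congrFun hA i]
      rw [h2] at hexp
      simp at hexp
      rw [hexp] at this
      simp at this
  · have hle : ∀ y : Fin m → ℝ,
        ((fun i => (y i : ℂ)) ⬝ᵥ Z *ᵥ (fun i => (y i : ℂ))).re ≤ 0 := by
      intro y
      by_cases hy : y = 0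
      · subst hy; simp
      · exact le_of_lt (hneg y hy)
    have h1 := hneg a hA
    have h2 := hle b
    have h3 : (ac ⬝ᵥ Z *ᵥ ac).re + (bc ⬝ᵥ Z *ᵥ bc).re = 0 := by
      rw [← Complex.add_re, hexp]; simp
    linarith

open Matrix in
private theorem auxPC_re {m : ℕ} (Z : Matrix (Fin m) (Fin m) ℂ) (y : Fin m → ℝ) :
    ((fun i => (y i : ℂ)) ⬝ᵥ Z *ᵥ (fun i => (y i : ℂ))).re
      = y ⬝ᵥ (Z.map Complex.re) *ᵥ y := by
  simp only [dotProduct, Matrix.mulVec, Matrix.map_apply, Finset.mul_sum,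
    Complex.re_sum]
  congr 1; funext i; congr 1; funext j
  simp [Complex.mul_re]

open Matrix in
private theorem auxPC_neg11 {p q : ℕ} (W : Matrix (Fin p) (Fin p) ℝ)
    (X : Matrix (Fin p) (Fin q) ℝ) (Y : Matrix (Fin q) (Fin p) ℝ)
    (Z : Matrix (Fin q) (Fin q) ℝ) (h : (-(Matrix.fromBlocks W X Y Z)).PosDef) :
    ∀ y : Fin p → ℝ, y ≠ 0 → y ⬝ᵥ W *ᵥ y < 0 := by
  intro y hy
  have hx : (Sum.elim y 0 : Fin p ⊕ Fin q → ℝ) ≠ 0 := by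
    intro hc; apply hy; funext i; exact congrFun hc (Sum.inl i)
  have := h.dotProduct_mulVec_pos (x := Sum.elim y 0) hx
  simp only [Matrix.neg_mulVec, Matrix.fromBlocks_mulVec, Sum.elim_comp_inl,
    Sum.elim_comp_inr, Matrix.mulVec_zero, add_zero, star_trivial,
    dotProduct_neg, sumElim_dotProduct_sumElim,
    zero_dotProduct, dotProduct_zero, zero_add] at this
  linarith

open Matrix in
private theorem auxPC_neg22 {p q : ℕ} (W : Matrix (Fin p) (Fin p) ℝ)
    (X : Matrix (Fin p) (Fin q) ℝ) (Y : Matrix (Fin q) (Fin p) ℝ)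
    (Z : Matrix (Fin q) (Fin q) ℝ) (h : (-(Matrix.fromBlocks W X Y Z)).PosDef) :
    ∀ y : Fin q → ℝ, y ≠ 0 → y ⬝ᵥ Z *ᵥ y < 0 := by
  intro y hy
  have hx : (Sum.elim 0 y : Fin p ⊕ Fin q → ℝ) ≠ 0 := by
    intro hc; apply hy; funext i; exact congrFun hc (Sum.inr i)
  have := h.dotProduct_mulVec_pos (x := Sum.elim 0 y) hx
  simp only [Matrix.neg_mulVec, Matrix.fromBlocks_mulVec, Sum.elim_comp_inl,
    Sum.elim_comp_inr, Matrix.mulVec_zero, zero_add, star_trivial,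
    dotProduct_neg, sumElim_dotProduct_sumElim,
    zero_dotProduct, dotProduct_zero, add_zero] at this
  linarith

/-- composition of morphisms in Potapov coordinates.
If `S(P) = [[A,B],[Bᵗ,C]]` (for `P : V_m ⇉ V_n`) and `S(Q) = [[K,L],[Lᵗ,M]]`
(for `Q : V_k ⇉ V_m`), then `C + K` is invertible and
`S(PQ) = [[A − B(C+K)⁻¹Bᵗ, −B(C+K)⁻¹L],[−Lᵗ(C+K)⁻¹Bᵗ, M − Lᵗ(C+K)⁻¹L]]`. -/
theorem potapov_of_relComp (m n k : ℕ)
    (P : Submodule ℂ (Vsp m × Vsp n)) (Q : Submodule ℂ (Vsp k × Vsp m))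
    (hP : IsMorphism P) (hQ : IsMorphism Q)
    (A : Matrix (Fin n) (Fin n) ℂ) (B : Matrix (Fin n) (Fin m) ℂ)
    (C : Matrix (Fin m) (Fin m) ℂ)
    (K : Matrix (Fin m) (Fin m) ℂ) (L : Matrix (Fin m) (Fin k) ℂ)
    (M : Matrix (Fin k) (Fin k) ℂ)
    (hSP_symm : (Matrix.fromBlocks A B Bᵀ C)ᵀ = Matrix.fromBlocks A B Bᵀ C)
    (hSP_neg : (-((Matrix.fromBlocks A B Bᵀ C).map Complex.re)).PosDef)
    (hSP : (P : Set (Vsp m × Vsp n)) = potapovSet (Matrix.fromBlocks A B Bᵀ C))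
    (hSQ_symm : (Matrix.fromBlocks K L Lᵀ M)ᵀ = Matrix.fromBlocks K L Lᵀ M)
    (hSQ_neg : (-((Matrix.fromBlocks K L Lᵀ M).map Complex.re)).PosDef)
    (hSQ : (Q : Set (Vsp k × Vsp m)) = potapovSet (Matrix.fromBlocks K L Lᵀ M)) :
    IsUnit (C + K) ∧
    ((relComp Q P : Submodule ℂ (Vsp k × Vsp n)) : Set (Vsp k × Vsp n)) =
      potapovSet (Matrix.fromBlocks
        (A - B * (C + K)⁻¹ * Bᵀ) (-(B * (C + K)⁻¹ * L))
        (-(Lᵀ * (C + K)⁻¹ * Bᵀ)) (M - Lᵀ * (C + K)⁻¹ * L)) := by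
  -- symmetry of the relevant blocks
  have hCsym : Cᵀ = C := by
    have := congrArg Matrix.toBlocks₂₂ hSP_symm
    simpa [Matrix.fromBlocks_transpose] using this
  have hKsym : Kᵀ = K := by
    have := congrArg Matrix.toBlocks₁₁ hSQ_symm
    simpa [Matrix.fromBlocks_transpose] using this
  -- negative definiteness of the real parts of C and K
  have hPmap : ((Matrix.fromBlocks A B Bᵀ C).map Complex.re)
      = Matrix.fromBlocks (A.map Complex.re) (B.map Complex.re)
        (Bᵀ.map Complex.re) (C.map Complex.re) := Matrix.fromBlocks_map A B Bᵀ C _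
  have hQmap : ((Matrix.fromBlocks K L Lᵀ M).map Complex.re)
      = Matrix.fromBlocks (K.map Complex.re) (L.map Complex.re)
        (Lᵀ.map Complex.re) (M.map Complex.re) := Matrix.fromBlocks_map K L Lᵀ M _
  rw [hPmap] at hSP_neg
  rw [hQmap] at hSQ_neg
  have hCneg := auxPC_neg22 _ _ _ _ hSP_neg
  have hKneg := auxPC_neg11 _ _ _ _ hSQ_neg
  -- invertibility of C + K
  have hmapadd : (C + K).map Complex.re = C.map Complex.re + K.map Complex.re := by
    ext i j; simp [Matrix.map_apply]
  have hinv : IsUnit (C + K) := by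
    apply auxPC_isUnit
    · rw [Matrix.transpose_add, hCsym, hKsym]
    · intro y hy
      rw [auxPC_re, hmapadd, Matrix.add_mulVec, dotProduct_add]
      have := hCneg y hy
      have := hKneg y hy
      linarith
  refine ⟨hinv, ?_⟩
  have hdet : IsUnit (C + K).det := (Matrix.isUnit_iff_isUnit_det _).mp hinv
  have h1inv : (C + K) * (C + K)⁻¹ = 1 := Matrix.mul_nonsing_inv _ hdet
  have h2inv : (C + K)⁻¹ * (C + K) = 1 := Matrix.nonsing_inv_mul _ hdet
  ext x
  obtain ⟨⟨u1, u2⟩, v1, v2⟩ := x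
  simp only [SetLike.mem_coe, potapovSet, Set.mem_setOf_eq,
    Matrix.toBlocks_fromBlocks₁₁, Matrix.toBlocks_fromBlocks₁₂,
    Matrix.toBlocks_fromBlocks₂₁, Matrix.toBlocks_fromBlocks₂₂]
  have hmem : ∀ z : Vsp k × Vsp n, z ∈ relComp Q P ↔
      ∃ w : Vsp m, (z.1, w) ∈ Q ∧ (w, z.2) ∈ P := fun z => Iff.rfl
  rw [hmem ((u1, u2), v1, v2)]
  constructor
  · rintro ⟨⟨w1, w2⟩, hq, hp⟩
    rw [← SetLike.mem_coe, hSQ] at hq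
    rw [← SetLike.mem_coe, hSP] at hp
    simp only [potapovSet, Set.mem_setOf_eq,
      Matrix.toBlocks_fromBlocks₁₁, Matrix.toBlocks_fromBlocks₁₂,
      Matrix.toBlocks_fromBlocks₂₁, Matrix.toBlocks_fromBlocks₂₂] at hq hp
    obtain ⟨hq1, hq2⟩ := hq
    obtain ⟨hp1, hp2⟩ := hp
    have hck : (C + K) *ᵥ w2 = -(Bᵀ *ᵥ v2) - L *ᵥ u2 := by
      have h := hq1
      rw [hp2] at h
      funext i
      have h' := congrFun h i
      simp only [Pi.neg_apply, Pi.add_apply, Pi.sub_apply, Matrix.add_mulVec] at h' ⊢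
      linear_combination -h'
    have hw2 : w2 = (C + K)⁻¹ *ᵥ (-(Bᵀ *ᵥ v2) - L *ᵥ u2) := by
      rw [← hck, Matrix.mulVec_mulVec, h2inv, Matrix.one_mulVec]
    constructor
    · rw [hp1, hw2]
      simp only [Matrix.mulVec_sub, Matrix.mulVec_neg, Matrix.mulVec_mulVec,
        Matrix.sub_mulVec, Matrix.neg_mulVec, Matrix.mul_assoc]
      abel
    · rw [hq2, hw2]
      simp only [Matrix.mulVec_sub, Matrix.mulVec_neg, Matrix.mulVec_mulVec,
        Matrix.sub_mulVec, Matrix.neg_mulVec, Matrix.mul_assoc]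
      abel
  · rintro ⟨hg1, hg2⟩
    set t : Fin m → ℂ := (C + K)⁻¹ *ᵥ (-(Bᵀ *ᵥ v2) - L *ᵥ u2) with ht
    have htt : (C + K) *ᵥ t = -(Bᵀ *ᵥ v2) - L *ᵥ u2 := by
      rw [ht, Matrix.mulVec_mulVec, h1inv, Matrix.one_mulVec]
    refine ⟨(Bᵀ *ᵥ v2 + C *ᵥ t, t), ?_, ?_⟩
    · rw [← SetLike.mem_coe, hSQ]
      simp only [potapovSet, Set.mem_setOf_eq,
        Matrix.toBlocks_fromBlocks₁₁, Matrix.toBlocks_fromBlocks₁₂,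
        Matrix.toBlocks_fromBlocks₂₁, Matrix.toBlocks_fromBlocks₂₂]
      constructor
      · funext i
        have h' := congrFun htt i
        simp only [Matrix.add_mulVec, Pi.add_apply, Pi.sub_apply, Pi.neg_apply] at h' ⊢
        linear_combination -h'
      · rw [hg2, ht]
        simp only [Matrix.mulVec_sub, Matrix.mulVec_neg, Matrix.mulVec_mulVec,
          Matrix.sub_mulVec, Matrix.neg_mulVec, Matrix.mul_assoc]
        abel
    · rw [← SetLike.mem_coe, hSP]
      simp only [potapovSet, Set.mem_setOf_eq,
        Matrix.toBlocks_fromBlocks₁₁, Matrix.toBlocks_fromBlocks₁₂,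
        Matrix.toBlocks_fromBlocks₂₁, Matrix.toBlocks_fromBlocks₂₂]
      refine ⟨?_, by trivial⟩
      rw [hg1, ht]
      simp only [Matrix.mulVec_sub, Matrix.mulVec_neg, Matrix.mulVec_mulVec,
        Matrix.sub_mulVec, Matrix.neg_mulVec, Matrix.mul_assoc]
      abel
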